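/- For the Potts clique potential with λ > 0, the α-pass algorithm's output v̂ satisfies F(v̂) ≥ (13/15) F(v*), where v* is the optimal assignment. -/

import Mathlib

lemma div_pos_step (a d : ℝ) (ha : 0 < a) (h : 0 ≤ a * d) : 0 ≤ d := by
  nlinarith [h, ha]

lemma pure_ineq (a b c M Q : ℝ) (h0 : 0 ≤ c) (hcb : c ≤ b) (hba : b ≤ a)
    (hM : 0 ≤ M) (hQc : Q ≤ M*c) (hQM : Q ≤ M*M) :
    13*(a^2+b^2+c^2+Q) ≤ 11*a^2+2*(a+b)^2+2*(a+b+c+M)^2 ∨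
    13*(a^2+b^2+c^2+Q) ≤ 12*a^2+(a+b+c)^2+2*(a+b+c+M)^2 := by
  have hb : 0 ≤ b := le_trans h0 hcb
  have ha : 0 ≤ a := le_trans hb hba
  have hu : 0 ≤ a - b := by linarith
  have hv : 0 ≤ b - c := by linarith
  rcases eq_or_lt_of_le ha with hae | hap
  · -- a = 0 hence b = c = 0
    have hb0 : b = 0 := by linarith
    have hc0 : c = 0 := by linarith
    right
    nlinarith [hQc, hM, sq_nonneg M]
  rcases le_total M c with hMc | hMc
  · have hw : 0 ≤ c - M := by linarith
    have hQ' : 13*Q ≤ 13*(M*M) := by linarith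
    rcases le_total (12*a^2+(a+b+c)^2) (11*a^2+2*(a+b)^2) with h | h
    · left
      have hh : 0 ≤ 2*(a+b)^2 - a^2 - (a+b+c)^2 := by linarith
      have step : 0 ≤ a * ((11*a^2+2*(a+b)^2+2*(a+b+c+M)^2) - 13*(a^2+b^2+c^2+M*M)) := by
        linarith [mul_nonneg (mul_nonneg hv hv) hv, mul_nonneg hu (mul_nonneg h0 h0),
          mul_nonneg hv (mul_nonneg h0 h0), mul_nonneg (mul_nonneg hu hu) hM,
          mul_nonneg (mul_nonneg hu hu) hu, mul_nonneg hu (mul_nonneg hv hv),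
          mul_nonneg hv (mul_nonneg hM hM), mul_nonneg (mul_nonneg hu hv) hM,
          mul_nonneg (mul_nonneg hM h0) hw, mul_nonneg (mul_nonneg hu hu) hv,
          mul_nonneg (mul_nonneg hu hu) h0, mul_nonneg (mul_nonneg hv hv) hM,
          mul_nonneg (mul_nonneg hu hv) h0, mul_nonneg hu (mul_nonneg hM hM),
          mul_nonneg (mul_nonneg hu hM) hw, mul_nonneg (mul_nonneg hv hv) h0,
          mul_nonneg hM (mul_nonneg h0 h0), mul_nonneg (mul_nonneg hv hM) hw,
          mul_nonneg h0 hh]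
      have := div_pos_step _ _ hap step
      linarith
    · right
      have hh : 0 ≤ 12*a^2+(a+b+c)^2 - (11*a^2+2*(a+b)^2) := by linarith
      have step : 0 ≤ a * ((12*a^2+(a+b+c)^2+2*(a+b+c+M)^2) - 13*(a^2+b^2+c^2+M*M)) := by
        linarith [mul_nonneg hu (mul_nonneg h0 h0), mul_nonneg hu (mul_nonneg hv hv),
          mul_nonneg hv hh,
          mul_nonneg (mul_nonneg hu hu) hM, mul_nonneg (mul_nonneg hu hu) hu,
          mul_nonneg hv (mul_nonneg hM hM), mul_nonneg hv (mul_nonneg h0 h0),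
          mul_nonneg (mul_nonneg hu hv) hM, mul_nonneg (mul_nonneg hM h0) hw,
          mul_nonneg (mul_nonneg hu hu) hv, mul_nonneg (mul_nonneg hu hu) h0,
          mul_nonneg (mul_nonneg hv hv) hM, mul_nonneg (mul_nonneg hu hv) h0,
          mul_nonneg hu (mul_nonneg hM hM), mul_nonneg (mul_nonneg hu hM) hw,
          mul_nonneg (mul_nonneg hv hv) h0, mul_nonneg hM (mul_nonneg h0 h0),
          mul_nonneg (mul_nonneg hv hM) hw, mul_nonneg (mul_nonneg hv hv) hv]
      have := div_pos_step _ _ hap step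
      linarith
  · have hw : 0 ≤ M - c := by linarith
    have hQ' : 13*Q ≤ 13*(M*c) := by linarith
    rcases le_total (12*a^2+(a+b+c)^2) (11*a^2+2*(a+b)^2) with h | h
    · left
      have hh : 0 ≤ 2*(a+b)^2 - a^2 - (a+b+c)^2 := by linarith
      have step : 0 ≤ a * ((11*a^2+2*(a+b)^2+2*(a+b+c+M)^2) - 13*(a^2+b^2+c^2+M*c)) := by
        linarith [mul_nonneg (mul_nonneg hv hv) hv, mul_nonneg hu (mul_nonneg h0 h0),
          mul_nonneg hv (mul_nonneg h0 h0), mul_nonneg (mul_nonneg hu hM) h0,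
          mul_nonneg (mul_nonneg hu hu) hu, mul_nonneg hu (mul_nonneg hv hv),
          mul_nonneg (mul_nonneg hv hM) h0, mul_nonneg hM hh,
          mul_nonneg (mul_nonneg hM h0) hw, mul_nonneg hu (mul_nonneg hM hM),
          mul_nonneg (mul_nonneg hu hu) hv, mul_nonneg (mul_nonneg hu hu) h0,
          mul_nonneg (mul_nonneg hu hu) hM, mul_nonneg (mul_nonneg hu hv) h0,
          mul_nonneg (mul_nonneg hu hv) hM, mul_nonneg hv (mul_nonneg hM hM),
          mul_nonneg (mul_nonneg hv hv) h0, mul_nonneg (mul_nonneg hv hv) hM,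
          mul_nonneg (mul_nonneg h0 h0) hw, mul_nonneg (mul_nonneg hM hM) h0]
      have := div_pos_step _ _ hap step
      linarith
    · right
      have hh : 0 ≤ 12*a^2+(a+b+c)^2 - (11*a^2+2*(a+b)^2) := by linarith
      have step : 0 ≤ a * ((12*a^2+(a+b+c)^2+2*(a+b+c+M)^2) - 13*(a^2+b^2+c^2+M*c)) := by
        linarith [mul_nonneg hu (mul_nonneg h0 h0), mul_nonneg hu (mul_nonneg hv hv),
          mul_nonneg hv hh, mul_nonneg (mul_nonneg hu hM) h0,
          mul_nonneg (mul_nonneg hu hu) hu, mul_nonneg (mul_nonneg hv hM) h0,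
          mul_nonneg hv (mul_nonneg h0 h0), mul_nonneg (mul_nonneg hM h0) hw,
          mul_nonneg hu (mul_nonneg hM hM), mul_nonneg (mul_nonneg hu hu) hv,
          mul_nonneg (mul_nonneg hu hu) h0, mul_nonneg (mul_nonneg hu hu) hM,
          mul_nonneg (mul_nonneg hu hv) h0, mul_nonneg (mul_nonneg hu hv) hM,
          mul_nonneg hv (mul_nonneg hM hM), mul_nonneg (mul_nonneg hv hv) h0,
          mul_nonneg (mul_nonneg hv hv) hM, mul_nonneg (mul_nonneg h0 h0) hw,
          mul_nonneg (mul_nonneg hM hM) h0, mul_nonneg (mul_nonneg hv hv) hv]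
      have := div_pos_step _ _ hap step
      linarith
open Finset
section helpers
variable {n R : ℕ} (lam : ℝ) (ψ : Fin n → Fin R → ℝ)
  (F : (Fin n → Fin R) → ℝ) (vhat : Fin n → Fin R)

lemma key_bound (hlam : 0 < lam) (hψ : ∀ j v, 0 ≤ ψ j v)
    (hF : ∀ w, F w = ∑ j, ψ j (w j) +
      lam * ∑ v, ((Finset.univ.filter fun j => w j = v).card : ℝ) ^ 2)
    (hvhat : ∀ (α : Fin R) (k : ℕ), k ≤ n → ∃ u : Fin n → Fin R,
      (Finset.univ.filter fun j => u j = α).card = k ∧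
      (∀ w : Fin n → Fin R, (Finset.univ.filter fun j => w j = α).card = k →
        ∑ j, ψ j (w j) ≤ ∑ j, ψ j (u j)) ∧
      F u ≤ F vhat)
    (α : Fin R) (u₀ : Fin n → Fin R) :
    ∑ j, ψ j (u₀ j) + lam * ((Finset.univ.filter fun j => u₀ j = α).card : ℝ)^2
      ≤ F vhat := by
  classical
  set k : ℕ := (Finset.univ.filter fun j => u₀ j = α).card with hk
  have hkn : k ≤ n := by
    calc k ≤ (Finset.univ : Finset (Fin n)).card := Finset.card_filter_le _ _
    _ = n := by simp
  obtain ⟨u, hcard, hopt, hFu⟩ := hvhat α k hkn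
  have h1 : ∑ j, ψ j (u₀ j) ≤ ∑ j, ψ j (u j) := hopt u₀ rfl
  have h2 : ((Finset.univ.filter fun j => u j = α).card : ℝ)^2
      ≤ ∑ v, ((Finset.univ.filter fun j => u j = v).card : ℝ)^2 :=
    Finset.single_le_sum (f := fun v => ((Finset.univ.filter fun j => u j = v).card : ℝ)^2)
      (fun v _ => sq_nonneg _) (Finset.mem_univ α)
  have h3 : F u = ∑ j, ψ j (u j) +
      lam * ∑ v, ((Finset.univ.filter fun j => u j = v).card : ℝ) ^ 2 := hF u
  rw [hcard] at h2
  nlinarith [mul_le_mul_of_nonneg_left h2 (le_of_lt hlam)]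

lemma merge_bound (hlam : 0 < lam) (hψ : ∀ j v, 0 ≤ ψ j v)
    (hF : ∀ w, F w = ∑ j, ψ j (w j) +
      lam * ∑ v, ((Finset.univ.filter fun j => w j = v).card : ℝ) ^ 2)
    (hvhat : ∀ (α : Fin R) (k : ℕ), k ≤ n → ∃ u : Fin n → Fin R,
      (Finset.univ.filter fun j => u j = α).card = k ∧
      (∀ w : Fin n → Fin R, (Finset.univ.filter fun j => w j = α).card = k →
        ∑ j, ψ j (w j) ≤ ∑ j, ψ j (u j)) ∧
      F u ≤ F vhat)
    (w : Fin n → Fin R) (A : Finset (Fin R)) (α : Fin R) (hα : α ∈ A) :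
    (∑ j, ψ j (w j))
      - (∑ v ∈ A, ∑ j ∈ Finset.univ.filter (fun j => w j = v), ψ j (w j))
      + (∑ j ∈ Finset.univ.filter (fun j => w j = α), ψ j (w j))
      + lam * ((∑ v ∈ A, (Finset.univ.filter (fun j => w j = v)).card : ℕ):ℝ)^2
      ≤ F vhat := by
  classical
  set u₀ : Fin n → Fin R := fun j => if w j ∈ A then α else w j with hu₀
  have hfeq : (Finset.univ.filter fun j => u₀ j = α)
      = (Finset.univ.filter fun j => w j ∈ A) := by
    ext j
    simp only [Finset.mem_filter, Finset.mem_univ, true_and, hu₀]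
    by_cases hj : w j ∈ A
    · simp [hj]
    · simp only [hj, if_false]
      exact ⟨fun h => absurd (h ▸ hα) hj, False.elim⟩
  have hinner : ∀ v ∈ A, (Finset.univ.filter (fun j => w j ∈ A)).filter (fun j => w j = v)
      = Finset.univ.filter (fun j => w j = v) := by
    intro v hv
    ext j
    simp only [Finset.mem_filter, Finset.mem_univ, true_and]
    constructor
    · rintro ⟨-, h⟩; exact h
    · intro h; exact ⟨h ▸ hv, h⟩
  have hcard : (Finset.univ.filter fun j => u₀ j = α).card
      = ∑ v ∈ A, (Finset.univ.filter (fun j => w j = v)).card := by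
    rw [hfeq]
    rw [Finset.card_eq_sum_card_fiberwise (f := w) (s := Finset.univ.filter fun j => w j ∈ A) (t := A)
      (fun j hj => (Finset.mem_filter.mp hj).2)]
    exact Finset.sum_congr rfl fun v hv => by rw [hinner v hv]
  -- sum lower bound
  have hsplit : ∑ j, ψ j (u₀ j)
      = (∑ j ∈ Finset.univ.filter (fun j => w j ∈ A), ψ j α)
        + ∑ j ∈ Finset.univ.filter (fun j => ¬ (w j ∈ A)), ψ j (w j) := by
    rw [← Finset.sum_filter_add_sum_filter_not Finset.univ (fun j => w j ∈ A)
      (fun j => ψ j (u₀ j))]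
    congr 1
    · exact Finset.sum_congr rfl fun j hj => by
        simp only [hu₀, (Finset.mem_filter.mp hj).2, if_true]
    · exact Finset.sum_congr rfl fun j hj => by
        simp only [hu₀, (Finset.mem_filter.mp hj).2, if_false]
  have hA1 : (∑ j ∈ Finset.univ.filter (fun j => w j = α), ψ j (w j))
      ≤ ∑ j ∈ Finset.univ.filter (fun j => w j ∈ A), ψ j α := by
    have hsub : Finset.univ.filter (fun j => w j = α)
        ⊆ Finset.univ.filter (fun j => w j ∈ A) := by
      intro j hj
      simp only [Finset.mem_filter, Finset.mem_univ, true_and] at hj ⊢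
      exact hj ▸ hα
    calc (∑ j ∈ Finset.univ.filter (fun j => w j = α), ψ j (w j))
        = ∑ j ∈ Finset.univ.filter (fun j => w j = α), ψ j α :=
          Finset.sum_congr rfl fun j hj => by rw [(Finset.mem_filter.mp hj).2]
      _ ≤ _ := Finset.sum_le_sum_of_subset_of_nonneg hsub fun j _ _ => hψ j α
  have hA2 : ∑ j ∈ Finset.univ.filter (fun j => ¬ (w j ∈ A)), ψ j (w j)
      = (∑ j, ψ j (w j))
        - ∑ v ∈ A, ∑ j ∈ Finset.univ.filter (fun j => w j = v), ψ j (w j) := by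
    have h1 : (∑ j ∈ Finset.univ.filter (fun j => w j ∈ A), ψ j (w j))
        + ∑ j ∈ Finset.univ.filter (fun j => ¬ (w j ∈ A)), ψ j (w j)
        = ∑ j, ψ j (w j) :=
      Finset.sum_filter_add_sum_filter_not Finset.univ _ _
    have h2 : (∑ j ∈ Finset.univ.filter (fun j => w j ∈ A), ψ j (w j))
        = ∑ v ∈ A, ∑ j ∈ Finset.univ.filter (fun j => w j = v), ψ j (w j) := by
      rw [← Finset.sum_fiberwise_of_maps_to (g := w) (t := A)
        (fun j hj => (Finset.mem_filter.mp hj).2)]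
      exact Finset.sum_congr rfl fun v hv => by rw [hinner v hv]
    linarith
  have hkey := key_bound lam ψ F vhat hlam hψ hF hvhat α u₀
  rw [hcard] at hkey
  have : (∑ j ∈ Finset.univ.filter (fun j => w j = α), ψ j (w j))
      + ((∑ j, ψ j (w j))
        - ∑ v ∈ A, ∑ j ∈ Finset.univ.filter (fun j => w j = v), ψ j (w j))
      ≤ ∑ j, ψ j (u₀ j) := by
    rw [hsplit, ← hA2]
    exact add_le_add hA1 le_rfl
  linarith

end helpers

lemma abstract_final {R : ℕ} (hR : 0 < R) (lam B : ℝ) (hlam : 0 < lam)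
    (S : Fin R → ℝ) (cnt : Fin R → ℕ) (N : ℕ) (Psi : ℝ)
    (hS0 : ∀ v, 0 ≤ S v) (hcnt : ∑ v, cnt v = N) (hPsiS : ∑ v, S v = Psi)
    (hmerge : ∀ A : Finset (Fin R), ∀ α ∈ A,
      Psi - (∑ v ∈ A, S v) + S α + lam * (((∑ v ∈ A, cnt v) : ℕ):ℝ)^2 ≤ B) :
    (13/15) * (Psi + lam * ∑ v, ((cnt v : ℕ):ℝ)^2) ≤ B := by
  classical
  have hPsi0 : 0 ≤ Psi := hPsiS ▸ Finset.sum_nonneg fun v _ => hS0 v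
  have hNe : Nonempty (Fin R) := Fin.pos_iff_nonempty.mp hR
  have hNcast : ∑ v, ((cnt v : ℕ):ℝ) = (N : ℝ) := by
    exact_mod_cast congrArg (Nat.cast : ℕ → ℝ) hcnt
  obtain ⟨α₁, -, hmax1⟩ := Finset.exists_max_image Finset.univ (fun v => cnt v)
    Finset.univ_nonempty
  by_cases hR1 : R = 1
  · -- single class
    have huniv : (Finset.univ : Finset (Fin R)) = {α₁} :=
      (Finset.eq_univ_of_card _ (by simp [hR1])).symm
    have hm := hmerge Finset.univ α₁ (Finset.mem_univ α₁)
    rw [hPsiS] at hm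
    rw [hcnt] at hm
    have hS1 : S α₁ = Psi := by rw [← hPsiS, huniv, Finset.sum_singleton]
    have hc2 : ∑ v, ((cnt v : ℕ):ℝ)^2 = ((N:ℕ):ℝ)^2 := by
      rw [huniv, Finset.sum_singleton]
      have : cnt α₁ = N := by rw [← hcnt, huniv, Finset.sum_singleton]
      rw [this]
    rw [hc2]
    rw [hS1] at hm
    nlinarith [sq_nonneg ((N:ℕ):ℝ)]
  by_cases hR2 : R = 2
  · -- two classes
    have hs1ne : (Finset.univ.erase α₁).Nonempty := by
      rw [← Finset.card_pos, Finset.card_erase_of_mem (Finset.mem_univ α₁)]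
      simp [hR2]
    obtain ⟨α₂, hα₂⟩ := hs1ne
    have h21 : α₂ ≠ α₁ := Finset.ne_of_mem_erase hα₂
    have h12 : α₁ ≠ α₂ := h21.symm
    have huniv : (Finset.univ : Finset (Fin R)) = {α₁, α₂} :=
      (Finset.eq_univ_of_card _ (by rw [Finset.card_pair h12]; simp [hR2])).symm
    have hba : ((cnt α₂ : ℕ):ℝ) ≤ ((cnt α₁ : ℕ):ℝ) :=
      Nat.cast_le.mpr (hmax1 α₂ (Finset.mem_univ α₂))
    have hb0 : (0:ℝ) ≤ ((cnt α₂ : ℕ):ℝ) := Nat.cast_nonneg _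
    have hC0 : Psi + lam * ((cnt α₁ : ℕ):ℝ)^2 ≤ B := by
      have hm := hmerge {α₁} α₁ (Finset.mem_singleton_self α₁)
      simp only [Finset.sum_singleton] at hm
      linarith
    have hsum2S : ∑ v ∈ ({α₁, α₂} : Finset (Fin R)), S v = S α₁ + S α₂ :=
      Finset.sum_pair h12
    have hsum2c : (((∑ v ∈ ({α₁, α₂} : Finset (Fin R)), cnt v) : ℕ):ℝ)
        = ((cnt α₁ : ℕ):ℝ) + ((cnt α₂ : ℕ):ℝ) := by
      rw [Finset.sum_pair h12]; push_cast; ring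
    have hC21 : Psi - S α₂ + lam * (((cnt α₁:ℕ):ℝ) + ((cnt α₂:ℕ):ℝ))^2 ≤ B := by
      have hm := hmerge {α₁, α₂} α₁ (Finset.mem_insert_self α₁ _)
      rw [hsum2S, hsum2c] at hm
      linarith
    have hC22 : Psi - S α₁ + lam * (((cnt α₁:ℕ):ℝ) + ((cnt α₂:ℕ):ℝ))^2 ≤ B := by
      have hm := hmerge {α₁, α₂} α₂
        (Finset.mem_insert_of_mem (Finset.mem_singleton_self α₂))
      rw [hsum2S, hsum2c] at hm
      linarith
    have hPsi2 : Psi = S α₁ + S α₂ := by rw [← hPsiS, huniv, hsum2S]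
    have hc2 : ∑ v, ((cnt v : ℕ):ℝ)^2 = ((cnt α₁:ℕ):ℝ)^2 + ((cnt α₂:ℕ):ℝ)^2 := by
      rw [huniv, Finset.sum_pair h12]
    rw [hc2]
    have hpure : 13*(((cnt α₁:ℕ):ℝ)^2 + ((cnt α₂:ℕ):ℝ)^2)
        ≤ 11*((cnt α₁:ℕ):ℝ)^2 + 4*(((cnt α₁:ℕ):ℝ) + ((cnt α₂:ℕ):ℝ))^2 := by
      nlinarith [mul_nonneg hb0 (sub_nonneg.mpr hba), sq_nonneg (((cnt α₁:ℕ):ℝ) - ((cnt α₂:ℕ):ℝ))]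
    have hs := mul_le_mul_of_nonneg_left hpure (le_of_lt hlam)
    have hS1 := hS0 α₁
    have hS2 := hS0 α₂
    linarith
  -- R ≥ 3
  have hR3 : 3 ≤ R := by omega
  have hs1ne : (Finset.univ.erase α₁).Nonempty := by
    rw [← Finset.card_pos, Finset.card_erase_of_mem (Finset.mem_univ α₁)]
    simp only [Finset.card_univ, Fintype.card_fin]; omega
  obtain ⟨α₂, hα₂, hmax2⟩ := Finset.exists_max_image (Finset.univ.erase α₁)
    (fun v => cnt v) hs1ne
  have hs2ne : ((Finset.univ.erase α₁).erase α₂).Nonempty := by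
    rw [← Finset.card_pos, Finset.card_erase_of_mem hα₂,
      Finset.card_erase_of_mem (Finset.mem_univ α₁)]
    simp only [Finset.card_univ, Fintype.card_fin]; omega
  obtain ⟨α₃, hα₃, hmax3⟩ := Finset.exists_max_image ((Finset.univ.erase α₁).erase α₂)
    (fun v => cnt v) hs2ne
  have h21 : α₂ ≠ α₁ := Finset.ne_of_mem_erase hα₂
  have h32 : α₃ ≠ α₂ := Finset.ne_of_mem_erase hα₃
  have h31 : α₃ ≠ α₁ := Finset.ne_of_mem_erase (Finset.mem_of_mem_erase hα₃)
  set rest := ((Finset.univ.erase α₁).erase α₂).erase α₃ with hrest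
  have hdecℝ : ∀ f : Fin R → ℝ, ∑ v, f v = f α₁ + (f α₂ + (f α₃ + ∑ v ∈ rest, f v)) := by
    intro f
    rw [hrest, Finset.add_sum_erase _ f hα₃, Finset.add_sum_erase _ f hα₂,
      Finset.add_sum_erase _ f (Finset.mem_univ α₁)]
  set a := ((cnt α₁ : ℕ):ℝ) with hadef
  set b := ((cnt α₂ : ℕ):ℝ) with hbdef
  set c := ((cnt α₃ : ℕ):ℝ) with hcdef
  set Mr := ∑ v ∈ rest, ((cnt v : ℕ):ℝ) with hMdef
  set Q := ∑ v ∈ rest, ((cnt v : ℕ):ℝ)^2 with hQdef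
  have hba : b ≤ a := Nat.cast_le.mpr (hmax1 α₂ (Finset.mem_univ α₂))
  have hcb : c ≤ b := Nat.cast_le.mpr (hmax2 α₃ (Finset.mem_of_mem_erase hα₃))
  have h0c : (0:ℝ) ≤ c := Nat.cast_nonneg _
  have hM0 : (0:ℝ) ≤ Mr := Finset.sum_nonneg fun v _ => Nat.cast_nonneg _
  have hQc : Q ≤ Mr * c := by
    rw [hQdef, hMdef, Finset.sum_mul]
    apply Finset.sum_le_sum
    intro v hv
    have h1 : ((cnt v : ℕ):ℝ) ≤ c := Nat.cast_le.mpr (hmax3 v (Finset.mem_of_mem_erase hv))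
    have h2 : (0:ℝ) ≤ ((cnt v : ℕ):ℝ) := Nat.cast_nonneg _
    nlinarith
  have hQM : Q ≤ Mr * Mr := by
    rw [hQdef, hMdef, Finset.sum_mul]
    apply Finset.sum_le_sum
    intro v hv
    have h1 : ((cnt v : ℕ):ℝ) ≤ Mr := by
      rw [hMdef]
      exact Finset.single_le_sum (f := fun v => ((cnt v : ℕ):ℝ))
        (fun x _ => Nat.cast_nonneg _) hv
    have h2 : (0:ℝ) ≤ ((cnt v : ℕ):ℝ) := Nat.cast_nonneg _
    nlinarith
  have hNdec : (N : ℝ) = a + b + c + Mr := by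
    rw [← hNcast, hdecℝ (fun v => ((cnt v : ℕ):ℝ))]; ring
  have hCdec : ∑ v, ((cnt v : ℕ):ℝ)^2 = a^2 + b^2 + c^2 + Q := by
    rw [hdecℝ (fun v => ((cnt v : ℕ):ℝ)^2)]; ring
  -- constraints
  have hC0 : Psi + lam * a^2 ≤ B := by
    have hm := hmerge {α₁} α₁ (Finset.mem_singleton_self α₁)
    simp only [Finset.sum_singleton] at hm
    linarith
  have hsum2S : ∑ v ∈ ({α₁, α₂} : Finset (Fin R)), S v = S α₁ + S α₂ :=
    Finset.sum_pair h21.symm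
  have hsum2c : (((∑ v ∈ ({α₁, α₂} : Finset (Fin R)), cnt v) : ℕ):ℝ) = a + b := by
    rw [Finset.sum_pair h21.symm]; push_cast; ring
  have hC21 : Psi - S α₂ + lam * (a+b)^2 ≤ B := by
    have hm := hmerge {α₁, α₂} α₁ (Finset.mem_insert_self α₁ _)
    rw [hsum2S, hsum2c] at hm; linarith
  have hC22 : Psi - S α₁ + lam * (a+b)^2 ≤ B := by
    have hm := hmerge {α₁, α₂} α₂
      (Finset.mem_insert_of_mem (Finset.mem_singleton_self α₂))
    rw [hsum2S, hsum2c] at hm; linarith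
  have h1n23 : α₁ ∉ ({α₂, α₃} : Finset (Fin R)) := by
    simp only [Finset.mem_insert, Finset.mem_singleton]
    push_neg
    exact ⟨fun h => h21 h.symm, fun h => h31 h.symm⟩
  have hsum3S : ∑ v ∈ ({α₁, α₂, α₃} : Finset (Fin R)), S v = S α₁ + (S α₂ + S α₃) := by
    rw [Finset.sum_insert h1n23, Finset.sum_pair (Ne.symm h32)]
  have hsum3c : (((∑ v ∈ ({α₁, α₂, α₃} : Finset (Fin R)), cnt v) : ℕ):ℝ) = a + b + c := by
    rw [Finset.sum_insert h1n23, Finset.sum_pair (Ne.symm h32)]; push_cast; ring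
  have hm1 : α₁ ∈ ({α₁, α₂, α₃} : Finset (Fin R)) := Finset.mem_insert_self _ _
  have hm2 : α₂ ∈ ({α₁, α₂, α₃} : Finset (Fin R)) :=
    Finset.mem_insert_of_mem (Finset.mem_insert_self _ _)
  have hm3 : α₃ ∈ ({α₁, α₂, α₃} : Finset (Fin R)) :=
    Finset.mem_insert_of_mem (Finset.mem_insert_of_mem (Finset.mem_singleton_self _))
  have hC31 : Psi - S α₂ - S α₃ + lam * (a+b+c)^2 ≤ B := by
    have hm := hmerge {α₁, α₂, α₃} α₁ hm1
    rw [hsum3S, hsum3c] at hm; linarith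
  have hC32 : Psi - S α₁ - S α₃ + lam * (a+b+c)^2 ≤ B := by
    have hm := hmerge {α₁, α₂, α₃} α₂ hm2
    rw [hsum3S, hsum3c] at hm; linarith
  have hC33 : Psi - S α₁ - S α₂ + lam * (a+b+c)^2 ≤ B := by
    have hm := hmerge {α₁, α₂, α₃} α₃ hm3
    rw [hsum3S, hsum3c] at hm; linarith
  have hCf1 : S α₁ + lam * (a+b+c+Mr)^2 ≤ B := by
    have hm := hmerge Finset.univ α₁ (Finset.mem_univ α₁)
    rw [hPsiS, hcnt] at hm
    rw [← hNdec]; linarith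
  have hCf2 : S α₂ + lam * (a+b+c+Mr)^2 ≤ B := by
    have hm := hmerge Finset.univ α₂ (Finset.mem_univ α₂)
    rw [hPsiS, hcnt] at hm
    rw [← hNdec]; linarith
  have hCf3 : S α₃ + lam * (a+b+c+Mr)^2 ≤ B := by
    have hm := hmerge Finset.univ α₃ (Finset.mem_univ α₃)
    rw [hPsiS, hcnt] at hm
    rw [← hNdec]; linarith
  rw [hCdec]
  rcases pure_ineq a b c Mr Q h0c hcb hba hM0 hQc hQM with h | h
  · have hs := mul_le_mul_of_nonneg_left h (le_of_lt hlam)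
    have hS1 := hS0 α₁
    have hS2 := hS0 α₂
    have hS3 := hS0 α₃
    linarith
  · have hs := mul_le_mul_of_nonneg_left h (le_of_lt hlam)
    have hS1 := hS0 α₁
    have hS2 := hS0 α₂
    have hS3 := hS0 α₃
    linarith


/-- For the Potts clique potential `C(v) = λ Σ_v n_v(v)²` with `λ > 0` and
nonnegative vertex potentials, the α-pass output `v̂` (which scores at least as well as, for
every value `α` and count `k`, the vertex-score-optimal assignment with `n_α = k`) satisfies
`F(v̂) ≥ (13/15) F(v*)` for every assignment `v*`. -/
theorem alpha_pass_potts_thirteen_fifteenths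
    {n R : ℕ} (lam : ℝ) (hlam : 0 < lam)
    (ψ : Fin n → Fin R → ℝ) (hψ : ∀ j v, 0 ≤ ψ j v)
    (F : (Fin n → Fin R) → ℝ)
    (hF : ∀ w, F w = ∑ j, ψ j (w j) +
      lam * ∑ v, ((Finset.univ.filter fun j => w j = v).card : ℝ) ^ 2)
    (vhat : Fin n → Fin R)
    (hvhat : ∀ (α : Fin R) (k : ℕ), k ≤ n → ∃ u : Fin n → Fin R,
      (Finset.univ.filter fun j => u j = α).card = k ∧
      (∀ w : Fin n → Fin R, (Finset.univ.filter fun j => w j = α).card = k →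
        ∑ j, ψ j (w j) ≤ ∑ j, ψ j (u j)) ∧
      F u ≤ F vhat) :
    ∀ w : Fin n → Fin R, (13 / 15) * F w ≤ F vhat := by
  classical
  intro w
  have hFv0 : 0 ≤ F vhat := by
    rw [hF]
    have h1 : 0 ≤ ∑ j, ψ j (vhat j) := Finset.sum_nonneg fun j _ => hψ j _
    have h2 : 0 ≤ ∑ v, ((Finset.univ.filter fun j => vhat j = v).card : ℝ) ^ 2 :=
      Finset.sum_nonneg fun v _ => sq_nonneg _
    nlinarith
  by_cases hn0 : n = 0
  · subst hn0
    have hcnt : ∀ v : Fin R, ((Finset.univ.filter fun j => w j = v).card : ℝ) = 0 := by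
      intro v
      have h := Finset.card_filter_le (Finset.univ : Finset (Fin 0)) (fun j => w j = v)
      simp at h
      simp [h]
    have hFw : F w = 0 := by
      rw [hF]
      have h2 : ∑ v, ((Finset.univ.filter fun j => w j = v).card : ℝ) ^ 2 = 0 := by
        apply Finset.sum_eq_zero
        intro v _
        rw [hcnt v]; ring
      rw [h2]; simp
    rw [hFw]; linarith
  have hnpos : 0 < n := Nat.pos_of_ne_zero hn0
  have hRpos : 0 < R := Fin.pos (w ⟨0, hnpos⟩)
  have habs := abstract_final hRpos lam (F vhat) hlam
    (fun v => ∑ j ∈ Finset.univ.filter (fun j => w j = v), ψ j (w j))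
    (fun v => (Finset.univ.filter fun j => w j = v).card)
    n (∑ j, ψ j (w j))
    (fun v => Finset.sum_nonneg fun j _ => hψ j _)
    (by
      have h := Finset.card_eq_sum_card_fiberwise
        (f := w) (s := Finset.univ) (t := Finset.univ) (fun j _ => Finset.mem_univ (w j))
      simp only [Finset.card_univ, Fintype.card_fin] at h
      exact h.symm)
    (Finset.sum_fiberwise_of_maps_to (fun j _ => Finset.mem_univ (w j)) _)
    (fun A α hα => merge_bound lam ψ F vhat hlam hψ hF hvhat w A α hα)
  rw [hF]
  exact habs
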